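/- For i, j ∈ [0, N-1] with j > i and |supp(bin(j)) \ supp(bin(i))| = 1, the Hamming weight of g_i + g_j in G_N = G_2^{⊗n} satisfies w(g_i + g_j) = w(g_i) whenever w(g_j) = w(g_i), i.e., adding such a row g_j of equal weight to g_i preserves the weight 2^{w(bin(i))}. -/

import Mathlib

open Matrix Finset

/-- The 2×2 kernel `G₂ = [[1,0],[1,1]]` over `F₂`. -/
def G2 : Matrix (Fin 2) (Fin 2) (ZMod 2) := !![1, 0; 1, 1]

/-- `GN n = G₂^{⊗n}`, the `n`-th Kronecker power of `G₂`. -/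
def GN : (n : ℕ) → Matrix (Fin (2 ^ n)) (Fin (2 ^ n)) (ZMod 2)
  | 0 => 1
  | n + 1 =>
    Matrix.reindex (finProdFinEquiv.trans (finCongr (by rw [pow_succ]; ring)))
      (finProdFinEquiv.trans (finCongr (by rw [pow_succ]; ring)))
      (Matrix.kroneckerMap (· * ·) G2 (GN n))

/-- Hamming weight of a vector over `F₂`. -/
def wt {N : ℕ} (v : Fin N → ZMod 2) : ℕ := (Finset.univ.filter fun j => v j ≠ 0).card

/-- The support of the binary representation of `k`. -/
def bsupp (k : ℕ) : Finset ℕ := (Finset.range k).filter (fun a => k.testBit a = true)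

/-- Number of ones in the binary representation of `k`. -/
def popcount (k : ℕ) : ℕ := (bsupp k).card

/-! ### Auxiliary lemmas -/

theorem and_eq_left_iff (x y : ℕ) : x &&& y = x ↔ ∀ b, x.testBit b = true → y.testBit b = true := by
  constructor
  · intro h b hb
    have := congrArg (fun t => t.testBit b) h
    simp only [Nat.testBit_and, hb, Bool.true_and] at this
    exact this
  · intro h
    apply Nat.eq_of_testBit_eq
    intro b
    simp only [Nat.testBit_and]
    cases hx : x.testBit b with
    | false => simp
    | true => simp [h b hx]

theorem and_split (n x y : ℕ) : x &&& y = x ↔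
    ((x / 2^n) &&& (y / 2^n) = x / 2^n ∧ (x % 2^n) &&& (y % 2^n) = x % 2^n) := by
  simp only [and_eq_left_iff]
  constructor
  · intro h
    constructor
    · intro b hb
      rw [← Nat.shiftRight_eq_div_pow] at hb ⊢
      rw [Nat.testBit_shiftRight] at hb ⊢
      exact h _ hb
    · intro b hb
      rw [Nat.testBit_mod_two_pow] at hb ⊢
      simp only [Bool.and_eq_true, decide_eq_true_eq] at hb ⊢
      exact ⟨hb.1, h _ hb.2⟩
  · rintro ⟨h1, h2⟩ b hb
    by_cases hbn : b < n
    · have : (x % 2^n).testBit b = true := by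
        rw [Nat.testBit_mod_two_pow]; simp [hbn, hb]
      have := h2 b this
      rw [Nat.testBit_mod_two_pow] at this
      simp only [Bool.and_eq_true, decide_eq_true_eq] at this
      exact this.2
    · have hble : n ≤ b := le_of_not_gt hbn
      have : (x / 2^n).testBit (b - n) = true := by
        rw [← Nat.shiftRight_eq_div_pow, Nat.testBit_shiftRight]
        rwa [Nat.add_sub_cancel' hble]
      have := h1 _ this
      rw [← Nat.shiftRight_eq_div_pow, Nat.testBit_shiftRight, Nat.add_sub_cancel' hble] at this
      exact this

theorem G2_apply (a b : Fin 2) : G2 a b = if b.val &&& a.val = b.val then 1 else 0 := by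
  fin_cases a <;> fin_cases b <;> simp [G2]

theorem GN_succ_apply (n : ℕ) (i k : Fin (2 ^ (n+1))) :
    GN (n+1) i k = G2 ⟨i.val / 2^n, Nat.div_lt_of_lt_mul (by simpa [pow_succ] using i.isLt)⟩
        ⟨k.val / 2^n, Nat.div_lt_of_lt_mul (by simpa [pow_succ] using k.isLt)⟩ *
      GN n ⟨i.val % 2^n, Nat.mod_lt _ (by positivity)⟩ ⟨k.val % 2^n, Nat.mod_lt _ (by positivity)⟩ := by
  show (Matrix.reindex _ _ _) i k = _
  rw [Matrix.reindex_apply]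
  simp [Matrix.kroneckerMap, finProdFinEquiv, Fin.divNat, Fin.modNat, finCongr]

theorem GN_apply : ∀ (n : ℕ) (i k : Fin (2^n)),
    GN n i k = if k.val &&& i.val = k.val then 1 else 0 := by
  intro n
  induction n with
  | zero =>
    intro i k
    fin_cases i <;> fin_cases k <;> simp [GN]
  | succ n ih =>
    intro i k
    rw [GN_succ_apply, G2_apply, ih]
    simp only [Fin.val_mk]
    simp only [and_split n k.val i.val]
    by_cases h1 : (k.val / 2^n) &&& (i.val / 2^n) = k.val / 2^n <;>
      by_cases h2 : (k.val % 2^n) &&& (i.val % 2^n) = k.val % 2^n <;>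
      simp [h1, h2]

theorem card_submask : ∀ (n m : ℕ),
    (univ.filter (fun k : Fin (2^n) => k.val &&& m = k.val)).card
      = 2 ^ (((Finset.range n).filter (fun b => m.testBit b = true)).card) := by
  intro n
  induction n with
  | zero =>
    intro m
    have h : ∀ k : Fin (2^0), k.val &&& m = k.val := by
      intro k
      have hk : k.val = 0 := by have := k.isLt; omega
      rw [hk]; exact Nat.zero_and m
    rw [Finset.filter_true_of_mem (fun k _ => h k)]
    simp
  | succ n ih =>
    intro m
    let e : Fin 2 × Fin (2^n) ≃ Fin (2^(n+1)) :=
      finProdFinEquiv.trans (finCongr (by rw [pow_succ]; ring))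
    have key : (univ.filter (fun k : Fin (2^(n+1)) => k.val &&& m = k.val)).card
        = ((univ ×ˢ univ).filter (fun x : Fin 2 × Fin (2^n) =>
            (x.1.val &&& (m / 2^n) = x.1.val) ∧ (x.2.val &&& (m % 2^n) = x.2.val))).card := by
      apply Finset.card_equiv e.symm
      intro k
      simp only [mem_filter, mem_univ, true_and, Finset.mem_product]
      have h1 : (e.symm k).1.val = k.val / 2^n := by
        simp [e, finProdFinEquiv, Fin.divNat, finCongr]
      have h2 : (e.symm k).2.val = k.val % 2^n := by
        simp [e, finProdFinEquiv, Fin.modNat, finCongr]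
      rw [h1, h2, and_split n k.val m]
    rw [key, Finset.filter_product (fun a : Fin 2 => a.val &&& (m / 2^n) = a.val)
      (fun b : Fin (2^n) => b.val &&& (m % 2^n) = b.val), Finset.card_product]
    have hone : (1 &&& (m / 2^n) = 1) ↔ (m.testBit n = true) := by
      rw [Nat.and_comm, Nat.and_one_is_mod, Nat.testBit_eq_decide_div_mod_eq]
      simp
    have hmods : ((Finset.range n).filter (fun b => (m % 2^n).testBit b = true))
        = ((Finset.range n).filter (fun b => m.testBit b = true)) := by
      apply Finset.filter_congr
      intro b hb
      rw [Finset.mem_range] at hb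
      simp [Nat.testBit_mod_two_pow, hb]
    rw [Finset.range_add_one, Finset.filter_insert]
    by_cases htb : m.testBit n = true
    · have hfull : (univ.filter (fun a : Fin 2 => a.val &&& (m / 2^n) = a.val)) = univ := by
        apply Finset.filter_true_of_mem
        intro a _
        fin_cases a
        · exact Nat.zero_and _
        · exact hone.mpr htb
      rw [hfull, if_pos htb, Finset.card_insert_of_notMem (by simp), ih, hmods]
      simp [pow_succ]
      ring
    · have hsingle : (univ.filter (fun a : Fin 2 => a.val &&& (m / 2^n) = a.val)) = {0} := by
        ext a
        fin_cases a
        · simp [Nat.zero_and]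
        · simp only [Finset.mem_filter, mem_univ, true_and, Finset.mem_singleton]
          constructor
          · intro h; exact absurd (hone.mp h) htb
          · intro h; exact absurd h (by decide)
      rw [hsingle, if_neg htb, ih, hmods]
      simp

theorem bsupp_eq_range_filter {n m : ℕ} (h : m < 2^n) :
    bsupp m = (Finset.range n).filter (fun b => m.testBit b = true) := by
  ext a
  simp only [bsupp, Finset.mem_filter, Finset.mem_range]
  constructor
  · rintro ⟨ha, hb⟩
    refine ⟨?_, hb⟩
    by_contra hna
    have hle : n ≤ a := le_of_not_gt hna
    have : m < 2^a := lt_of_lt_of_le h (Nat.pow_le_pow_right (by norm_num) hle)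
    rw [Nat.testBit_lt_two_pow this] at hb
    exact Bool.false_ne_true hb
  · rintro ⟨_, hb⟩
    refine ⟨?_, hb⟩
    have h1 : 2^a ≤ m := Nat.ge_two_pow_of_testBit hb
    have h2 : a < 2^a := Nat.lt_two_pow_self
    omega

theorem and_and_iff (x y z : ℕ) : (x &&& y = x ∧ x &&& z = x) ↔ x &&& (y &&& z) = x := by
  simp only [and_eq_left_iff, Nat.testBit_and, Bool.and_eq_true]
  constructor
  · rintro ⟨h1, h2⟩ b hb; exact ⟨h1 b hb, h2 b hb⟩
  · intro h; exact ⟨fun b hb => (h b hb).1, fun b hb => (h b hb).2⟩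

theorem weight_preserved_single_extra_bit (n : ℕ) (i j : Fin (2 ^ n))
    (hij : i < j) (hpop : popcount j.val = popcount i.val)
    (hdiff : (bsupp j.val \ bsupp i.val).card = 1) :
    wt (GN n i + GN n j) = 2 ^ popcount i.val := by
  set p := popcount i.val with hp
  have hin : i.val < 2^n := i.isLt
  have hjn : j.val < 2^n := j.isLt
  have haj : i.val &&& j.val < 2^n := lt_of_le_of_lt (Nat.and_le_left) hin
  have hinter : bsupp (i.val &&& j.val) = bsupp i.val ∩ bsupp j.val := by
    rw [bsupp_eq_range_filter haj, bsupp_eq_range_filter hin, bsupp_eq_range_filter hjn,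
      ← Finset.filter_and]
    apply Finset.filter_congr
    intro b _
    simp [Nat.testBit_and]
  have hp1 : 1 ≤ p := by
    have h1 : (bsupp j.val \ bsupp i.val).card ≤ (bsupp j.val).card :=
      Finset.card_le_card (Finset.sdiff_subset)
    have : popcount j.val = p := hpop
    unfold popcount at this
    omega
  have hcardinter : (bsupp i.val ∩ bsupp j.val).card = p - 1 := by
    have h1 : (bsupp j.val \ bsupp i.val).card + (bsupp j.val ∩ bsupp i.val).card
        = (bsupp j.val).card := Finset.card_sdiff_add_card_inter _ _
    rw [Finset.inter_comm] at h1
    have h2 : popcount j.val = p := hpop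
    unfold popcount at h2
    omega
  have hpinter : popcount (i.val &&& j.val) = p - 1 := by
    unfold popcount
    rw [hinter, hcardinter]
  set A := univ.filter (fun k : Fin (2^n) => k.val &&& i.val = k.val) with hA
  set B := univ.filter (fun k : Fin (2^n) => k.val &&& j.val = k.val) with hB
  have hcardA : A.card = 2 ^ p := by
    rw [hA, card_submask, ← bsupp_eq_range_filter hin]
    rfl
  have hcardB : B.card = 2 ^ p := by
    rw [hB, card_submask, ← bsupp_eq_range_filter hjn]
    show 2 ^ popcount j.val = 2 ^ p
    rw [hpop]
  have hcardAB : (A ∩ B).card = 2 ^ (p - 1) := by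
    rw [hA, hB, ← Finset.filter_and]
    have : ∀ k : Fin (2^n), (k.val &&& i.val = k.val ∧ k.val &&& j.val = k.val)
        ↔ k.val &&& (i.val &&& j.val) = k.val := fun k => and_and_iff _ _ _
    rw [Finset.filter_congr (fun k _ => by rw [this k])]
    rw [card_submask, ← bsupp_eq_range_filter haj]
    show 2 ^ popcount (i.val &&& j.val) = 2 ^ (p - 1)
    rw [hpinter]
  have hset : (univ.filter (fun k : Fin (2^n) => (GN n i + GN n j) k ≠ 0))
      = (A \ B) ∪ (B \ A) := by
    ext k
    simp only [hA, hB, Finset.mem_union, Finset.mem_sdiff, Finset.mem_filter, mem_univ,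
      true_and, Pi.add_apply, GN_apply]
    by_cases h1 : k.val &&& i.val = k.val <;> by_cases h2 : k.val &&& j.val = k.val <;>
      simp [h1, h2] <;> decide
  have hdisj : Disjoint (A \ B) (B \ A) := disjoint_sdiff_sdiff
  have hsAB : (A \ B).card + (A ∩ B).card = A.card := Finset.card_sdiff_add_card_inter _ _
  have hsBA : (B \ A).card + (A ∩ B).card = B.card := by
    rw [Finset.inter_comm]; exact Finset.card_sdiff_add_card_inter _ _
  have hwt : wt (GN n i + GN n j) = (A \ B).card + (B \ A).card := by
    unfold wt
    rw [hset, Finset.card_union_of_disjoint hdisj]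
  rw [hwt]
  have hpow : 2 ^ p = 2 ^ (p - 1) * 2 := by
    rw [← pow_succ]
    congr 1
    omega
  omega
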